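/- Fix an integer d ≥ 2, a partition λ with m := |λ|, and integers n_1 ≥ … ≥ n_d ≥ m + λ_1. For each integer l ≥ 0 set μ^{(l)} := λ[n_1+l, …, n_d+l], s_l := n_1 + l − m, N_l := |μ^{(l)}|, and F(l) := N_l! / ∏_{(i,j) ∈ μ^{(l)}} H(i,j), where the product of hook lengths runs over all boxes of the Young diagram of μ^{(l)}. Then there exists a polynomial q ∈ ℚ[x] with q(l) > 0 for all l ≥ 0 such that q(l)·F(l) ≥ d^{d·s_l + d·m} for every l ≥ 0. -/

import Mathlib

/-- A partition, encoded as the weakly decreasing, eventually zero sequence of its parts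
(0-indexed: `μ 0` is the first part `μ_1`). -/
def IsPartition (μ : ℕ → ℕ) : Prop := Antitone μ ∧ ∃ N, ∀ n ≥ N, μ n = 0

/-- The size `|μ|` of a partition: the sum of its parts. -/
noncomputable def psize (μ : ℕ → ℕ) : ℕ := ∑ᶠ i, μ i

/-- The `r`-padded partition `λ[n_1,…,n_r] = (n_1 − |λ|, …, n_r − |λ|, λ_1, λ_2, …)`. -/
noncomputable def pad (r : ℕ) (n : Fin r → ℕ) (lam : ℕ → ℕ) : ℕ → ℕ :=
  fun i => if h : i < r then n ⟨i, h⟩ - psize lam else lam (i - r)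

/-- The conjugate partition: `conjPart μ j` is the number of rows `i` with `μ i > j`. -/
noncomputable def conjPart (μ : ℕ → ℕ) (j : ℕ) : ℕ := Nat.card {i : ℕ // j < μ i}

/-- The hook length of the box in row `i`, column `j` (both 0-indexed) of `μ`:
in 1-indexed terms `H(i,j) = (μ_i − j) + (μ′_j − i) + 1`. -/
noncomputable def hookLen (μ : ℕ → ℕ) (i j : ℕ) : ℕ :=
  (μ i - (j + 1)) + (conjPart μ j - (i + 1)) + 1

/-- The product of the hook lengths over all boxes of the Young diagram of `μ`. -/
noncomputable def hookProd (μ : ℕ → ℕ) : ℕ :=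
  ∏ᶠ i : ℕ, ∏ j ∈ Finset.range (μ i), hookLen μ i j

open Finset

theorem fact_le_fact_mul_pow {B x : ℕ} : ∀ {y : ℕ}, x ≤ y → y ≤ B → y.factorial ≤ x.factorial * B ^ (y - x) := by
  intro y
  induction y with
  | zero => intro h _; interval_cases x; simp
  | succ y ih =>
    intro hxy hyB
    rcases Nat.lt_or_ge x (y+1) with h | h
    · have hx : x ≤ y := by omega
      have h1 : y.factorial ≤ x.factorial * B ^ (y - x) := ih hx (by omega)
      have h2 : (y+1).factorial = (y+1) * y.factorial := rfl
      rw [h2]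
      calc (y+1) * y.factorial ≤ B * (x.factorial * B ^ (y - x)) :=
            Nat.mul_le_mul (by omega) h1
        _ = x.factorial * B ^ (y - x + 1) := by ring
        _ = x.factorial * B ^ (y + 1 - x) := by rw [show y - x + 1 = y + 1 - x by omega]
    · have : x = y + 1 := by omega
      subst this; simp

theorem fact_mul_pow_le_fact {x : ℕ} : ∀ {y : ℕ}, x ≤ y → x.factorial * (x+1) ^ (y - x) ≤ y.factorial := by
  intro y
  induction y with
  | zero => intro h; interval_cases x; simp
  | succ y ih =>
    intro hxy
    rcases Nat.lt_or_ge x (y+1) with h | h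
    · have hx : x ≤ y := by omega
      have h1 := ih hx
      have h2 : (y+1).factorial = (y+1) * y.factorial := rfl
      rw [h2, show y + 1 - x = (y - x) + 1 by omega, pow_succ]
      calc x.factorial * ((x+1) ^ (y-x) * (x+1)) = (x+1) * (x.factorial * (x+1)^(y-x)) := by ring
        _ ≤ (y+1) * y.factorial := Nat.mul_le_mul (by omega) h1
    · have : x = y + 1 := by omega
      subst this; simp

theorem nat_eq_of_lt_iff {a b : ℕ} (h : ∀ i, i < a ↔ i < b) : a = b := by
  have h1 := h a; have h2 := h b; omega

theorem conjPart_iff {μ : ℕ → ℕ} (hmono : Antitone μ) {R : ℕ} (hR : ∀ i ≥ R, μ i = 0)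
    (j i : ℕ) : i < conjPart μ j ↔ j < μ i := by
  have hex : ∃ k, μ k ≤ j := ⟨R, by rw [hR R le_rfl]; omega⟩
  set N := Nat.find hex with hN
  have key : ∀ t, j < μ t ↔ t < N := by
    intro t
    constructor
    · intro h; by_contra hc; push_neg at hc
      have h1 : μ N ≤ j := Nat.find_spec hex
      have h2 := hmono (show N ≤ t from hc)
      omega
    · intro h; have := Nat.find_min hex h; omega
  have hc : conjPart μ j = N := by
    unfold conjPart
    have he : {i : ℕ // j < μ i} = {i : ℕ // i < N} := by
      congr 1; funext t; exact propext (key t)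
    rw [he]
    have h2 : {i : ℕ // i < N} = ↥(Set.Iio N) := rfl
    rw [h2, Nat.card_coe_set_eq, Set.ncard_eq_toFinset_card']; simp
  rw [hc, key]

theorem conjPart_le {μ : ℕ → ℕ} (hmono : Antitone μ) {R : ℕ} (hR : ∀ i ≥ R, μ i = 0)
    (j : ℕ) : conjPart μ j ≤ R := by
  by_contra h
  have := (conjPart_iff hmono hR j R).mp (by omega)
  rw [hR R le_rfl] at this; omega

theorem psize_eq {μ : ℕ → ℕ} {R : ℕ} (hR : ∀ i ≥ R, μ i = 0) :
    psize μ = ∑ i ∈ range R, μ i := by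
  unfold psize
  apply finsum_eq_sum_of_support_subset
  intro i hi
  simp only [Function.mem_support] at hi
  simp only [coe_range, Set.mem_Iio]
  by_contra h; push_neg at h
  exact hi (hR i h)

theorem hookProd_eq {μ : ℕ → ℕ} {R : ℕ} (hR : ∀ i ≥ R, μ i = 0) :
    hookProd μ = ∏ i ∈ range R, ∏ j ∈ range (μ i), hookLen μ i j := by
  unfold hookProd
  apply finprod_eq_prod_of_mulSupport_subset
  intro i hi
  simp only [Function.mem_mulSupport] at hi
  simp only [coe_range, Set.mem_Iio]
  by_contra h; push_neg at h
  rw [hR i h] at hi; simp at hi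

theorem hookProd_pos {μ : ℕ → ℕ} {R : ℕ} (hR : ∀ i ≥ R, μ i = 0) : 0 < hookProd μ := by
  rw [hookProd_eq hR]
  apply Finset.prod_pos
  intro i _
  apply Finset.prod_pos
  intro j _
  unfold hookLen; omega

theorem hookLen_le {μ : ℕ → ℕ} (hmono : Antitone μ) {R : ℕ} (hR : ∀ i ≥ R, μ i = 0)
    {i j : ℕ} (hj : j < μ i) : hookLen μ i j ≤ μ i + R - j := by
  have h1 := conjPart_le hmono hR j
  unfold hookLen; omega

theorem rowProd_le {μ : ℕ → ℕ} (hmono : Antitone μ) {R : ℕ} (hR : ∀ i ≥ R, μ i = 0)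
    (i : ℕ) : ∏ j ∈ Finset.range (μ i), hookLen μ i j ≤ (μ i + R).descFactorial (μ i) := by
  rw [Nat.descFactorial_eq_prod_range]
  apply Finset.prod_le_prod
  · intros; exact Nat.zero_le _
  · intro j hj
    rw [Finset.mem_range] at hj
    exact hookLen_le hmono hR hj

theorem lemB1 {μ : ℕ → ℕ} (hmono : Antitone μ) {R : ℕ} (hR : ∀ i ≥ R, μ i = 0) :
    hookProd μ ≤ ∏ i ∈ Finset.range R, ((μ i + R).descFactorial (μ i)) := by
  rw [hookProd_eq hR]
  apply Finset.prod_le_prod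
  · intros; exact Nat.zero_le _
  · intro i _; exact rowProd_le hmono hR i

theorem descFactorial_le_factorial (n k : ℕ) (h : k ≤ n) : n.descFactorial k ≤ n.factorial := by
  have := Nat.factorial_mul_descFactorial h
  calc n.descFactorial k ≤ (n-k).factorial * n.descFactorial k :=
        Nat.le_mul_of_pos_left _ (Nat.factorial_pos _)
    _ = n.factorial := this

theorem lemA_aux : ∀ N : ℕ, ∀ μ : ℕ → ℕ, IsPartition μ → psize μ = N →
    hookProd μ ≤ N.factorial := by
  intro N
  induction N using Nat.strong_induction_on with
  | _ N ih =>
    intro μ hμ hN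
    obtain ⟨hmono, R0, hR0⟩ := hμ
    by_cases h0 : μ 0 = 0
    · have hz : ∀ i ≥ 0, μ i = 0 := fun i _ => Nat.le_zero.mp (h0 ▸ hmono (Nat.zero_le i))
      rw [hookProd_eq hz]
      simpa using Nat.one_le_iff_ne_zero.mpr (Nat.factorial_ne_zero N)
    · -- μ 0 > 0
      have hR1 : ∀ i ≥ R0 + 1, μ i = 0 := fun i hi => hR0 i (by omega)
      set μ' : ℕ → ℕ := fun i => μ (i+1) with hμ'def
      have hmono' : Antitone μ' := fun a b hab => hmono (by omega)
      have hR' : ∀ i ≥ R0, μ' i = 0 := fun i hi => hR0 (i+1) (by omega)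
      have hpart' : IsPartition μ' := ⟨hmono', R0, hR'⟩
      set M := psize μ' with hM
      have hsum : N = M + μ 0 := by
        rw [← hN, psize_eq hR1, hM, psize_eq hR', Finset.sum_range_succ']
      -- conjPart shift
      have hconj1 : ∀ j, j < μ 0 → 0 < conjPart μ j := by
        intro j hj; rw [show (0 < conjPart μ j) = (0 < conjPart μ j) from rfl]
        exact (conjPart_iff hmono hR1 j 0).mpr hj
      have hshift : ∀ j, j < μ 0 → conjPart μ' j = conjPart μ j - 1 := by
        intro j hj
        apply nat_eq_of_lt_iff
        intro i
        rw [conjPart_iff hmono' hR' j i]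
        have h2 := conjPart_iff hmono hR1 j (i+1)
        have h3 := hconj1 j hj
        constructor
        · intro h; have := h2.mpr h; omega
        · intro h; exact h2.mp (by omega)
      -- hook prod factorization
      have hrow : ∀ i, ∏ j ∈ Finset.range (μ' i), hookLen μ' i j
          = ∏ j ∈ Finset.range (μ (i+1)), hookLen μ (i+1) j := by
        intro i
        apply Finset.prod_congr rfl
        intro j hj
        rw [Finset.mem_range] at hj
        have hjlt : j < μ 0 := lt_of_lt_of_le hj (hmono (Nat.zero_le _))
        unfold hookLen
        rw [hshift j hjlt]
        have := hconj1 j hjlt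
        simp only [hμ'def]
        omega
      have hfact : hookProd μ = hookProd μ' * ∏ j ∈ Finset.range (μ 0), hookLen μ 0 j := by
        rw [hookProd_eq hR1, hookProd_eq hR', Finset.prod_range_succ']
        congr 1
        exact Finset.prod_congr rfl (fun i _ => (hrow i).symm)
      -- row 0 bound
      have hcbound : ∀ j, j < μ 0 → μ 0 + conjPart μ j ≤ N + 1 := by
        intro j hj
        have hcle : conjPart μ j ≤ R0 := conjPart_le hmono hR0 j
        have hmem : ∀ i, i < conjPart μ j → 1 ≤ μ i := by
          intro i hi
          have := (conjPart_iff hmono hR1 j i).mp hi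
          omega
        revert hcle hmem
        generalize conjPart μ j = c
        intro hcle hmem
        have hsub : ∑ i ∈ Finset.range c, μ i ≤ ∑ i ∈ Finset.range (R0+1), μ i :=
          Finset.sum_le_sum_of_subset (Finset.range_subset_range.mpr (by omega))
        have hNsum : N = ∑ i ∈ Finset.range (R0+1), μ i := by rw [← hN, psize_eq hR1]
        rcases Nat.eq_zero_or_pos c with h | h
        · have : μ 0 ≤ N := by
            rw [hNsum]
            exact Finset.single_le_sum (f := μ) (fun i _ => Nat.zero_le _) (Finset.mem_range.mpr (by omega))
          omega
        · obtain ⟨c', rfl⟩ : ∃ c', c = c' + 1 := ⟨c - 1, by omega⟩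
          have h1 : ∑ i ∈ Finset.range (c'+1), μ i = (∑ i ∈ Finset.range c', μ (i+1)) + μ 0 :=
            Finset.sum_range_succ' μ c'
          have h2 : ∀ i ∈ Finset.range c', 1 ≤ μ (i+1) := by
            intro i hi
            rw [Finset.mem_range] at hi
            exact hmem (i+1) (by omega)
          have h3 : c' ≤ ∑ i ∈ Finset.range c', μ (i+1) := by
            calc c' = ∑ _i ∈ Finset.range c', 1 := by simp
              _ ≤ _ := Finset.sum_le_sum h2
          omega
      have hrow0 : ∏ j ∈ Finset.range (μ 0), hookLen μ 0 j ≤ N.descFactorial (μ 0) := by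
        rw [Nat.descFactorial_eq_prod_range]
        apply Finset.prod_le_prod
        · intros; exact Nat.zero_le _
        · intro j hj
          rw [Finset.mem_range] at hj
          have := hcbound j hj
          unfold hookLen
          omega
      -- combine
      have hμ0N : μ 0 ≤ N := by omega
      have hMlt : M < N := by omega
      have hIH : hookProd μ' ≤ M.factorial := ih M hMlt μ' hpart' rfl
      calc hookProd μ = hookProd μ' * ∏ j ∈ Finset.range (μ 0), hookLen μ 0 j := hfact
        _ ≤ M.factorial * N.descFactorial (μ 0) := Nat.mul_le_mul hIH hrow0
        _ = (N - μ 0).factorial * N.descFactorial (μ 0) := by rw [show N - μ 0 = M by omega]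
        _ = N.factorial := Nat.factorial_mul_descFactorial hμ0N

theorem lemA {μ : ℕ → ℕ} (hμ : IsPartition μ) : hookProd μ ≤ (psize μ).factorial :=
  lemA_aux (psize μ) μ hμ rfl

theorem coreK (e b c j A : ℕ) (he : 1 ≤ e)
    (hb1 : (e+1)*b ≤ A) (hb2 : A < (e+1)*(b+1))
    (hc1 : e*c ≤ A - j) (hc2 : A - j < e*(c+1)) (hj : j ≤ A) :
    b.factorial ^ (e+1) ≤ (A+1)^(2*(e+1)) * (j.factorial * c.factorial ^ e) := by
  have he1 : (e+1)*b = e*b + b := by ring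
  have he2 : (e+1)*(b+1) = e*b + b + e + 1 := by ring
  have he3 : e*(c+1) = e*c + e := by ring
  have hbA : b ≤ A := le_trans (by nlinarith) hb1
  have hb1A : b + 1 ≤ A + 1 := by omega
  have hApos : 0 < (A+1)^(2*(e+1)) := pow_pos (by omega) _
  rcases le_or_gt b c with hbc | hcb
  · -- b ≤ c
    have heb : e*b ≤ e*c := Nat.mul_le_mul_left e hbc
    rcases le_or_gt b j with hbj | hjb
    · -- b ≤ j : trivial case
      have h1 : b.factorial ^ (e+1) = b.factorial * b.factorial ^ e := by ring
      rw [h1]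
      have h2 : b.factorial * b.factorial ^ e ≤ j.factorial * c.factorial ^ e :=
        Nat.mul_le_mul (Nat.factorial_le hbj)
          (Nat.pow_le_pow_left (Nat.factorial_le hbc) e)
      exact le_trans h2 (Nat.le_mul_of_pos_left _ hApos)
    · -- j < b
      have hmc : e*(c-b) = e*c - e*b := Nat.mul_sub e c b
      have hexp : b - j ≤ e*(c-b) + 2*(e+1) := by omega
      have hA1 : b.factorial ≤ j.factorial * (b+1)^(b-j) :=
        fact_le_fact_mul_pow (le_of_lt hjb) (by omega)
      have hA2 : b.factorial ^ e * (b+1)^(e*(c-b)) ≤ c.factorial ^ e := by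
        have h := fact_mul_pow_le_fact (x := b) (y := c) hbc
        calc b.factorial ^ e * (b+1)^(e*(c-b))
            = (b.factorial * (b+1)^(c-b)) ^ e := by
              rw [mul_pow, ← pow_mul, mul_comm (c-b) e]
          _ ≤ c.factorial ^ e := Nat.pow_le_pow_left h e
      have hA3 : ((b:ℕ)+1)^(b-j) ≤ (b+1)^(e*(c-b)) * (A+1)^(2*(e+1)) := by
        calc ((b:ℕ)+1)^(b-j) ≤ (b+1)^(e*(c-b) + 2*(e+1)) :=
              Nat.pow_le_pow_right (by omega) hexp
          _ = (b+1)^(e*(c-b)) * (b+1)^(2*(e+1)) := by rw [pow_add]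
          _ ≤ (b+1)^(e*(c-b)) * (A+1)^(2*(e+1)) :=
              Nat.mul_le_mul_left _ (Nat.pow_le_pow_left hb1A _)
      calc b.factorial ^ (e+1) = b.factorial * b.factorial ^ e := by ring
        _ ≤ (j.factorial * (b+1)^(b-j)) * b.factorial ^ e := Nat.mul_le_mul_right _ hA1
        _ ≤ (j.factorial * ((b+1)^(e*(c-b)) * (A+1)^(2*(e+1)))) * b.factorial ^ e := by
            apply Nat.mul_le_mul_right
            exact Nat.mul_le_mul_left _ hA3
        _ = (A+1)^(2*(e+1)) * (j.factorial * (b.factorial ^ e * (b+1)^(e*(c-b)))) := by ring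
        _ ≤ (A+1)^(2*(e+1)) * (j.factorial * c.factorial ^ e) := by
            apply Nat.mul_le_mul_left
            exact Nat.mul_le_mul_left _ hA2
  · -- c < b
    have hce : e*(c+1) ≤ e*b := Nat.mul_le_mul_left e (by omega)
    have hbj : b ≤ j := by omega
    have hmc2 : e*(b-c) = e*b - e*c := Nat.mul_sub e b c
    have hexp2 : e*(b-c) ≤ (j - b) + 2*(e+1) := by omega
    have hB1 : b.factorial ≤ c.factorial * (b+1)^(b-c) :=
      fact_le_fact_mul_pow (le_of_lt hcb) (by omega)
    have hB2 : b.factorial ^ e ≤ c.factorial ^ e * (b+1)^(e*(b-c)) := by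
      calc b.factorial ^ e ≤ (c.factorial * (b+1)^(b-c)) ^ e := Nat.pow_le_pow_left hB1 e
        _ = c.factorial ^ e * (b+1)^(e*(b-c)) := by
            rw [mul_pow, ← pow_mul, mul_comm (b-c) e]
    have hB3 : b.factorial * (b+1)^(j-b) ≤ j.factorial := fact_mul_pow_le_fact hbj
    have hB4 : ((b:ℕ)+1)^(e*(b-c)) ≤ (b+1)^(j-b) * (A+1)^(2*(e+1)) := by
      calc ((b:ℕ)+1)^(e*(b-c)) ≤ (b+1)^((j-b) + 2*(e+1)) :=
            Nat.pow_le_pow_right (by omega) hexp2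
        _ = (b+1)^(j-b) * (b+1)^(2*(e+1)) := by rw [pow_add]
        _ ≤ (b+1)^(j-b) * (A+1)^(2*(e+1)) :=
            Nat.mul_le_mul_left _ (Nat.pow_le_pow_left hb1A _)
    calc b.factorial ^ (e+1) = b.factorial ^ e * b.factorial := by ring
      _ ≤ (c.factorial ^ e * (b+1)^(e*(b-c))) * b.factorial := Nat.mul_le_mul_right _ hB2
      _ ≤ (c.factorial ^ e * ((b+1)^(j-b) * (A+1)^(2*(e+1)))) * b.factorial := by
          apply Nat.mul_le_mul_right
          exact Nat.mul_le_mul_left _ hB4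
      _ = (A+1)^(2*(e+1)) * (c.factorial ^ e * (b.factorial * (b+1)^(j-b))) := by ring
      _ ≤ (A+1)^(2*(e+1)) * (j.factorial * c.factorial ^ e) := by
          apply Nat.mul_le_mul_left
          calc c.factorial ^ e * (b.factorial * (b+1)^(j-b))
              ≤ c.factorial ^ e * j.factorial := Nat.mul_le_mul_left _ hB3
            _ = j.factorial * c.factorial ^ e := by ring

theorem core : ∀ d : ℕ, 1 ≤ d → ∀ A : ℕ,
    d ^ A * (A/d).factorial ^ d ≤ (A+1) ^ (2*d*d) * A.factorial := by
  intro d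
  induction d with
  | zero => omega
  | succ e ihe =>
    intro _ A
    rcases Nat.eq_zero_or_pos e with rfl | he
    · -- d = 1
      norm_num
      exact Nat.le_mul_of_pos_left _ (pow_pos (by omega) _)
    · have IH := ihe he
      set b := A / (e+1) with hbdef
      have hbmod := Nat.div_add_mod A (e+1)
      rw [← hbdef] at hbmod
      have hbmodlt : A % (e+1) < e + 1 := Nat.mod_lt _ (by omega)
      have hb1 : (e+1)*b ≤ A := by omega
      have hb2 : A < (e+1)*(b+1) := by
        have : (e+1)*(b+1) = (e+1)*b + (e+1) := by ring
        omega
      have hbin : (e+1)^A = ∑ j ∈ Finset.range (A+1), e^(A-j) * A.choose j := by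
        rw [show e+1 = 1+e by ring, add_pow]
        apply Finset.sum_congr rfl
        intro j _
        simp
      have hterm : ∀ j ∈ Finset.range (A+1),
          (e^(A-j) * A.choose j) * (b.factorial ^ (e+1)) ≤
            (A+1)^(2*(e+1) + 2*e*e) * A.factorial := by
        intro j hjmem
        rw [Finset.mem_range] at hjmem
        have hj : j ≤ A := by omega
        set c := (A-j) / e with hcdef
        have hcmod := Nat.div_add_mod (A-j) e
        rw [← hcdef] at hcmod
        have hcmodlt : (A-j) % e < e := Nat.mod_lt _ (by omega)
        have hc1 : e*c ≤ A - j := by omega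
        have hc2 : A - j < e*(c+1) := by
          have : e*(c+1) = e*c + e := by ring
          omega
        have hK := coreK e b c j A he hb1 hb2 hc1 hc2 hj
        have hIH : e^(A-j) * c.factorial ^ e ≤ (A+1)^(2*e*e) * (A-j).factorial := by
          calc e^(A-j) * c.factorial ^ e ≤ (A-j+1)^(2*e*e) * (A-j).factorial := IH (A-j)
            _ ≤ (A+1)^(2*e*e) * (A-j).factorial := by
                apply Nat.mul_le_mul_right
                exact Nat.pow_le_pow_left (by omega) _
        calc (e^(A-j) * A.choose j) * (b.factorial ^ (e+1))
            ≤ (e^(A-j) * A.choose j) * ((A+1)^(2*(e+1)) * (j.factorial * c.factorial ^ e)) :=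
              Nat.mul_le_mul_left _ hK
          _ = (A+1)^(2*(e+1)) * (A.choose j * j.factorial * (e^(A-j) * c.factorial ^ e)) := by
              ring
          _ ≤ (A+1)^(2*(e+1)) * (A.choose j * j.factorial * ((A+1)^(2*e*e) * (A-j).factorial)) := by
              apply Nat.mul_le_mul_left
              exact Nat.mul_le_mul_left _ hIH
          _ = (A+1)^(2*(e+1) + 2*e*e) * (A.choose j * j.factorial * (A-j).factorial) := by
              rw [pow_add]; ring
          _ = (A+1)^(2*(e+1) + 2*e*e) * A.factorial := by
              rw [Nat.choose_mul_factorial_mul_factorial hj]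
      calc (e+1) ^ A * (b.factorial) ^ (e+1)
          = ∑ j ∈ Finset.range (A+1), (e^(A-j) * A.choose j) * (b.factorial ^ (e+1)) := by
            rw [hbin, Finset.sum_mul]
        _ ≤ ∑ _j ∈ Finset.range (A+1), (A+1)^(2*(e+1) + 2*e*e) * A.factorial :=
            Finset.sum_le_sum hterm
        _ = (A+1)^(2*(e+1) + 2*e*e + 1) * A.factorial := by
            rw [Finset.sum_const, Finset.card_range, smul_eq_mul, pow_succ]; ring
        _ ≤ (A+1)^(2*(e+1)*(e+1)) * A.factorial := by
            apply Nat.mul_le_mul_right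
            apply Nat.pow_le_pow_right (by omega)
            nlinarith

/-- Fix `d ≥ 2`, a partition `λ` with `m = |λ|`, and `n_1 ≥ … ≥ n_d ≥ m + λ_1`.  For
`l ≥ 0` put `μ^{(l)} := λ[n_1+l,…,n_d+l]`, `s_l := n_1 + l − m`, and let
`F(l) := |μ^{(l)}|! / ∏ hooks` be the dimension of the corresponding irreducible
(hook length formula).  Then there is a polynomial `q ∈ ℚ[x]`, positive on `ℕ`, with
`q(l)·F(l) ≥ d^{d·s_l + d·m}` for all `l ≥ 0`. -/
theorem padded_dimension_growth (d : ℕ) (hd : 2 ≤ d)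
    (lam : ℕ → ℕ) (hlam : IsPartition lam)
    (n : Fin d → ℕ) (hmono : Antitone n)
    (hbig : ∀ i, psize lam + lam 0 ≤ n i) :
    ∃ q : Polynomial ℚ, (∀ l : ℕ, 0 < q.eval (l : ℚ)) ∧
      ∀ l : ℕ,
        (d : ℚ) ^ (d * (n ⟨0, by omega⟩ + l - psize lam) + d * psize lam) ≤
          q.eval (l : ℚ) *
            ((psize (pad d (fun i => n i + l) lam)).factorial /
              hookProd (pad d (fun i => n i + l) lam) : ℕ) := by
  classical
  obtain ⟨hlmono, h', hh'⟩ := hlam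
  have hd0 : 0 < d := by omega
  set m := psize lam with hm
  set R := d + h' with hR
  set i0 : Fin d := ⟨0, by omega⟩ with hi0
  have hn0 : ∀ i : Fin d, n i ≤ n i0 := by
    intro i
    apply hmono
    simp [hi0, Fin.le_def]
  set Sc := ∑ i : Fin d, (n i - m) with hSc
  set E := ∑ i : Fin d, (n i0 - n i) with hE
  set G := E + d + 2*d*d + d*R with hG
  set c1 := ((lam 0 + R).factorial)^h' with hc1
  set D := d^((d-1)*m + E) with hD
  set K1 := 2 * D * (c1 * d^m) with hK1
  set c2 := Sc + d*R + 1 with hc2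
  refine ⟨Polynomial.C (K1:ℚ) * (Polynomial.C (c2:ℚ) + Polynomial.C (d:ℚ) * Polynomial.X)^G,
    ?_, ?_⟩
  · intro l
    simp only [Polynomial.eval_mul, Polynomial.eval_pow, Polynomial.eval_add,
      Polynomial.eval_C, Polynomial.eval_X]
    have hK1pos : 0 < K1 := by
      rw [hK1]
      exact Nat.mul_pos (Nat.mul_pos (by omega) (pow_pos hd0 _))
        (Nat.mul_pos (pow_pos (Nat.factorial_pos _) _) (pow_pos hd0 _))
    have h2 : (0:ℚ) < (K1:ℚ) := by exact_mod_cast hK1pos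
    have h3 : (0:ℚ) < (c2:ℚ) + (d:ℚ)*(l:ℚ) := by
      have ha : (1:ℚ) ≤ (c2:ℚ) := by exact_mod_cast (show 1 ≤ c2 by omega)
      have hb : (0:ℚ) ≤ (d:ℚ)*(l:ℚ) := by positivity
      linarith
    exact mul_pos h2 (pow_pos h3 G)
  · intro l
    set μ := pad d (fun i => n i + l) lam with hμdef
    have hmn : ∀ i : Fin d, m ≤ n i := by
      intro i; have := hbig i; omega
    have hμlt : ∀ (i : ℕ) (h : i < d), μ i = n ⟨i, h⟩ + l - m := by
      intro i h
      simp only [hμdef, pad, dif_pos h, hm]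
    have hμge : ∀ i : ℕ, d ≤ i → μ i = lam (i - d) := by
      intro i h
      simp only [hμdef, pad, dif_neg (by omega : ¬ i < d)]
    have hμR : ∀ i ≥ R, μ i = 0 := by
      intro i hi
      rw [hμge i (by omega)]
      exact hh' _ (by omega)
    have hμmono : Antitone μ := by
      intro i j hij
      rcases lt_or_ge j d with hjd | hjd
      · have hid : i < d := lt_of_le_of_lt hij hjd
        rw [hμlt i hid, hμlt j hjd]
        have := hmono (show (⟨i,hid⟩:Fin d) ≤ ⟨j,hjd⟩ from hij)
        omega
      · rcases lt_or_ge i d with hid | hid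
        · rw [hμlt i hid, hμge j hjd]
          have h1 : lam (j - d) ≤ lam 0 := hlmono (Nat.zero_le _)
          have h2 := hbig ⟨i, hid⟩
          omega
        · rw [hμge i hid, hμge j hjd]
          exact hlmono (by omega)
    have hμfin : ∀ i : Fin d, μ ↑i = n i + l - m := by
      intro i
      rw [hμlt ↑i i.isLt]
    obtain ⟨S, hS⟩ : ∃ S, ∑ i : Fin d, (n i + l - m) = S := ⟨_, rfl⟩
    have hSval : S = Sc + d*l := by
      rw [← hS]
      calc ∑ i : Fin d, (n i + l - m) = ∑ i : Fin d, ((n i - m) + l) := by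
            apply Finset.sum_congr rfl; intro i _; have := hmn i; omega
        _ = (∑ i : Fin d, (n i - m)) + d * l := by
            rw [Finset.sum_add_distrib, Finset.sum_const, Finset.card_univ,
              Fintype.card_fin, smul_eq_mul]
        _ = Sc + d*l := by rw [hSc]
    obtain ⟨N, hN⟩ : ∃ N, psize μ = N := ⟨_, rfl⟩
    have hNval : N = S + m := by
      rw [← hN, psize_eq hμR, hR, Finset.sum_range_add]
      congr 1
      · rw [← hS, ← Fin.sum_univ_eq_sum_range (fun i => μ i) d]
        exact Finset.sum_congr rfl (fun i _ => hμfin i)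
      · rw [hm, psize_eq hh']
        apply Finset.sum_congr rfl
        intro i hi
        rw [hμge (d+i) (by omega)]
        congr 1
        omega
    obtain ⟨A, hA⟩ : ∃ A, S + d*R = A := ⟨_, rfl⟩
    have haA : ∑ i : Fin d, (n i + l - m + R) = A := by
      rw [← hA, ← hS, Finset.sum_add_distrib, Finset.sum_const, Finset.card_univ,
        Fintype.card_fin, smul_eq_mul]
    obtain ⟨b, hb⟩ : ∃ b, A / d = b := ⟨_, rfl⟩
    have hbmod := Nat.div_add_mod A d
    rw [hb] at hbmod
    have hbmodlt : A % d < d := Nat.mod_lt _ hd0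
    obtain ⟨H, hH⟩ : ∃ H, hookProd μ = H := ⟨_, rfl⟩
    have hstep1 : H ≤ (∏ i : Fin d, (n i + l - m + R).factorial) * c1 := by
      rw [← hH]
      calc hookProd μ ≤ ∏ i ∈ Finset.range R, ((μ i + R).descFactorial (μ i)) :=
            lemB1 hμmono hμR
        _ = (∏ i ∈ Finset.range d, ((μ i + R).descFactorial (μ i))) *
              (∏ i ∈ Finset.range h', ((μ (d+i) + R).descFactorial (μ (d+i)))) := by
            rw [hR, Finset.prod_range_add]
        _ ≤ (∏ i : Fin d, (n i + l - m + R).factorial) * c1 := by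
            apply Nat.mul_le_mul
            · rw [← Fin.prod_univ_eq_prod_range (fun i => ((μ i + R).descFactorial (μ i))) d]
              apply Finset.prod_le_prod (fun _ _ => Nat.zero_le _)
              intro i _
              rw [hμfin i]
              exact descFactorial_le_factorial _ _ (by omega)
            · rw [hc1]
              have := Finset.prod_le_pow_card (Finset.range h')
                (fun i => ((μ (d+i) + R).descFactorial (μ (d+i)))) ((lam 0 + R).factorial) ?_
              · rwa [Finset.card_range] at this
              · intro i hi
                rw [Finset.mem_range] at hi
                rw [hμge (d+i) (by omega)]
                calc ((lam (d+i-d) + R).descFactorial (lam (d+i-d)))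
                    ≤ (lam (d+i-d) + R).factorial := descFactorial_le_factorial _ _ (by omega)
                  _ ≤ (lam 0 + R).factorial :=
                      Nat.factorial_le (by have := hlmono (Nat.zero_le (d+i-d)); omega)
    have haleA : ∀ i : Fin d, n i + l - m + R ≤ A := by
      intro i
      rw [← haA]
      exact Finset.single_le_sum (f := fun i : Fin d => n i + l - m + R)
        (fun j _ => Nat.zero_le _) (Finset.mem_univ i)
    have hfac : ∀ i : Fin d,
        (n i + l - m + R).factorial ≤ b.factorial * (A+1)^((n i + l - m + R) - b) := by
      intro i
      rcases le_or_gt (n i + l - m + R) b with h | h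
      · rw [Nat.sub_eq_zero_of_le h, pow_zero, Nat.mul_one]
        exact Nat.factorial_le h
      · exact fact_le_fact_mul_pow (le_of_lt h) (by have := haleA i; omega)
    have hdconst : ∀ c : ℕ, ∑ _i : Fin d, c = d * c := by
      intro c
      rw [Finset.sum_const, Finset.card_univ, Fintype.card_fin, smul_eq_mul]
    have hstep2 : (∏ i : Fin d, (n i + l - m + R).factorial) ≤
        b.factorial^d * (A+1)^(E + d) := by
      calc ∏ i : Fin d, (n i + l - m + R).factorial
          ≤ ∏ i : Fin d, (b.factorial * (A+1)^((n i + l - m + R) - b)) :=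
            Finset.prod_le_prod (fun _ _ => Nat.zero_le _) (fun i _ => hfac i)
        _ = b.factorial^d * (A+1)^(∑ i : Fin d, ((n i + l - m + R) - b)) := by
            rw [Finset.prod_mul_distrib, Finset.prod_const, Finset.card_univ,
              Fintype.card_fin, Finset.prod_pow_eq_pow_sum]
        _ ≤ b.factorial^d * (A+1)^(E + d) := by
            apply Nat.mul_le_mul_left
            apply Nat.pow_le_pow_right (by omega)
            have h2 : ∑ i : Fin d, ((n i + l - m + R) - b) ≤ d * ((n i0 + l - m + R) - b) := by
              calc ∑ i : Fin d, ((n i + l - m + R) - b)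
                  ≤ ∑ _i : Fin d, ((n i0 + l - m + R) - b) :=
                    Finset.sum_le_sum (fun i _ => by have := hn0 i; omega)
                _ = d * ((n i0 + l - m + R) - b) := hdconst _
            have h3 : d * ((n i0 + l - m + R) - b) = d*(n i0 + l - m + R) - d*b :=
              Nat.mul_sub d _ b
            have h4 : d * (n i0 + l - m + R) = A + E := by
              have h6 : ∑ _i : Fin d, (n i0 + l - m + R) =
                  ∑ i : Fin d, ((n i + l - m + R) + (n i0 - n i)) := by
                apply Finset.sum_congr rfl
                intro i _
                have := hn0 i; have := hmn i; omega
              rw [← hdconst (n i0 + l - m + R), h6, Finset.sum_add_distrib, haA, hE]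
            omega
    have hstep3 : d^A * b.factorial^d ≤ (A+1)^(2*d*d) * A.factorial := by
      have h := core d (by omega) A
      rw [hb] at h
      exact h
    have hstep4 : A.factorial ≤ N.factorial * (A+1)^(d*R) := by
      rcases le_or_gt N A with h | h
      · calc A.factorial ≤ N.factorial * (A+1)^(A-N) :=
              fact_le_fact_mul_pow h (by omega)
          _ ≤ N.factorial * (A+1)^(d*R) := by
              apply Nat.mul_le_mul_left
              apply Nat.pow_le_pow_right (by omega)
              omega
      · calc A.factorial ≤ N.factorial := Nat.factorial_le (by omega)
          _ ≤ N.factorial * (A+1)^(d*R) :=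
              Nat.le_mul_of_pos_right _ (pow_pos (by omega) _)
    have hstep4b : d^N ≤ d^m * d^A := by
      rw [← pow_add]
      exact Nat.pow_le_pow_right (by omega) (by omega)
    obtain ⟨x, hx⟩ : ∃ x, d ^ (d * (n i0 + l - m) + d * m) = x := ⟨_, rfl⟩
    have hexp : d * (n i0 + l - m) + d * m = N + ((d-1)*m + E) := by
      have h6 : ∑ _i : Fin d, (n i0 + l - m) =
          ∑ i : Fin d, ((n i + l - m) + (n i0 - n i)) := by
        apply Finset.sum_congr rfl
        intro i _
        have := hn0 i; have := hmn i; omega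
      have h7 : d * (n i0 + l - m) = S + E := by
        rw [← hdconst (n i0 + l - m), h6, Finset.sum_add_distrib, hS, hE]
      have h8 : (d-1)*m = d*m - m := Nat.sub_one_mul d m
      have h9 : m ≤ d * m := Nat.le_mul_of_pos_left m hd0
      omega
    have hxD : x = d^N * D := by
      rw [← hx, hexp, pow_add, hD]
    have hcc : H * d^N ≤ (c1 * d^m) * ((A+1)^G * N.factorial) := by
      calc H * d^N
          ≤ ((∏ i : Fin d, (n i + l - m + R).factorial) * c1) * (d^m * d^A) :=
            Nat.mul_le_mul hstep1 hstep4b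
        _ ≤ ((b.factorial^d * (A+1)^(E+d)) * c1) * (d^m * d^A) := by
            apply Nat.mul_le_mul_right
            exact Nat.mul_le_mul_right _ hstep2
        _ = (c1 * d^m) * ((A+1)^(E+d) * (d^A * b.factorial^d)) := by ring
        _ ≤ (c1 * d^m) * ((A+1)^(E+d) * ((A+1)^(2*d*d) * A.factorial)) := by
            apply Nat.mul_le_mul_left
            exact Nat.mul_le_mul_left _ hstep3
        _ ≤ (c1 * d^m) * ((A+1)^(E+d) * ((A+1)^(2*d*d) * (N.factorial * (A+1)^(d*R)))) := by
            apply Nat.mul_le_mul_left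
            apply Nat.mul_le_mul_left
            exact Nat.mul_le_mul_left _ hstep4
        _ = (c1 * d^m) * ((A+1)^G * N.factorial) := by
            rw [hG, pow_add, pow_add, pow_add]
            ring
    obtain ⟨Q, hQ⟩ : ∃ Q, K1 * (A+1)^G = Q := ⟨_, rfl⟩
    have hmaster : 2 * (H * x) ≤ Q * N.factorial := by
      rw [hxD, ← hQ]
      calc 2 * (H * (d^N * D)) = (2 * D) * (H * d^N) := by ring
        _ ≤ (2 * D) * ((c1 * d^m) * ((A+1)^G * N.factorial)) :=
            Nat.mul_le_mul_left _ hcc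
        _ = (K1 * (A+1)^G) * N.factorial := by rw [hK1]; ring
    have hHleN : H ≤ N.factorial := by
      have := lemA ⟨hμmono, R, hμR⟩
      rw [hH, hN] at this
      exact this
    have hHpos : 0 < H := by
      rw [← hH]
      exact hookProd_pos hμR
    have hF1 : 1 ≤ N.factorial / H := (Nat.one_le_div_iff hHpos).mpr hHleN
    have hdm2 := Nat.div_add_mod N.factorial H
    have hmodlt : N.factorial % H < H := Nat.mod_lt _ hHpos
    have hHF : H * 1 ≤ H * (N.factorial / H) := Nat.mul_le_mul_left H hF1
    have hNF : N.factorial ≤ 2 * (H * (N.factorial / H)) := by omega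
    have hfinal : x ≤ Q * (N.factorial / H) := by
      have h1 : (2*H) * x ≤ (2*H) * (Q * (N.factorial / H)) := by
        calc (2*H)*x = 2*(H*x) := by ring
          _ ≤ Q * N.factorial := hmaster
          _ ≤ Q * (2 * (H * (N.factorial / H))) := Nat.mul_le_mul_left _ hNF
          _ = (2*H) * (Q * (N.factorial/H)) := by ring
      exact Nat.le_of_mul_le_mul_left h1 (by omega)
    have hA1 : (A:ℚ) + 1 = (c2:ℚ) + (d:ℚ)*(l:ℚ) := by
      have : A + 1 = c2 + d*l := by omega
      exact_mod_cast this
    have hqeval : (Polynomial.C (K1:ℚ) *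
        (Polynomial.C (c2:ℚ) + Polynomial.C (d:ℚ) * Polynomial.X)^G).eval (l:ℚ) = (Q:ℚ) := by
      simp only [Polynomial.eval_mul, Polynomial.eval_pow, Polynomial.eval_add,
        Polynomial.eval_C, Polynomial.eval_X]
      rw [← hQ]
      push_cast
      have hA2 : (Sc:ℚ) + ↑d * ↑R + 1 + ↑d * ↑l = ↑A + 1 := by
        have h9 : Sc + d*R + 1 + d*l = A + 1 := by omega
        exact_mod_cast h9
      rw [hA1]
    show (d:ℚ) ^ (d * (n i0 + l - m) + d * m) ≤ _
    rw [hN, hH, hqeval]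
    calc (d:ℚ) ^ (d * (n i0 + l - m) + d * m)
        = ((d ^ (d * (n i0 + l - m) + d * m) : ℕ) : ℚ) := by push_cast; ring
      _ = ((x:ℕ):ℚ) := by rw [hx]
      _ ≤ ((Q * (N.factorial / H) : ℕ):ℚ) := by exact_mod_cast hfinal
      _ = (Q:ℚ) * ((N.factorial / H : ℕ):ℚ) := by push_cast; ring
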